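/- For every cake C and family S of pieces: Prope(C,2,S) ≥ Prop(C,2,S) · inf_{s∈S} Prope(s,2,S), where Prop(C,2,S) is the best guaranteed proportionality over all S-allocations to 2 agents, and Prope is the same restricted to envy-free S-allocations. -/

import Mathlib

open MeasureTheory
open scoped ENNReal

noncomputable section

variable {α : Type*}

/-- `sVal V S X` is the value `V^S(X)`. -/
def sVal [MeasurableSpace α] (V : Measure α) (S : Set (Set α)) (X : Set α) : ℝ≥0∞ :=
  ⨆ (s : Set α) (_ : s ∈ S ∧ s ⊆ X), V s

/-- An `S`-allocation of the cake `C`: each agent receives an `S`-piece, the pieces are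
pairwise disjoint and their union is contained in `C`. -/
def IsAlloc [MeasurableSpace α] (C : Set α) (S : Set (Set α)) {n : ℕ}
    (X : Fin n → Set α) : Prop :=
  (∀ i, X i ∈ S) ∧ (∀ i j, i ≠ j → Disjoint (X i) (X j)) ∧ (⋃ i, X i) ⊆ C

/-- Envy-freeness: each agent's `S`-value of their own piece is at least the `S`-value
of any other piece. -/
def IsEnvyFree [MeasurableSpace α] (S : Set (Set α)) {n : ℕ}
    (V : Fin n → Measure α) (X : Fin n → Set α) : Prop :=
  ∀ i j, sVal (V i) S (X j) ≤ sVal (V i) S (X i)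

/-- `Prop(C,n,S)`: the largest fraction that can be guaranteed to every agent by some
`S`-allocation, for the worst case over value measures (finite, absolutely continuous,
nonzero on `C`). -/
def propShare [MeasureSpace α] (C : Set α) (n : ℕ) (S : Set (Set α)) : ℝ≥0∞ :=
  ⨅ (V : Fin n → Measure α)
    (_ : ∀ i, IsFiniteMeasure (V i) ∧ V i ≪ volume ∧ V i C ≠ 0),
    ⨆ (X : Fin n → Set α) (_ : IsAlloc C S X), ⨅ i, V i (X i) / V i C

/-- `Prope(C,n,S)`: the same as `Prop(C,n,S)`, with the supremum restricted to envy-free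
`S`-allocations. -/
def propEF [MeasureSpace α] (C : Set α) (n : ℕ) (S : Set (Set α)) : ℝ≥0∞ :=
  ⨅ (V : Fin n → Measure α)
    (_ : ∀ i, IsFiniteMeasure (V i) ∧ V i ≪ volume ∧ V i C ≠ 0),
    ⨆ (X : Fin n → Set α) (_ : IsAlloc C S X ∧ IsEnvyFree S V X), ⨅ i, V i (X i) / V i C


lemma sVal_eq_of_mem [MeasurableSpace α] (V : Measure α) {S : Set (Set α)} {t : Set α}
    (ht : t ∈ S) : sVal V S t = V t := by
  refine le_antisymm (iSup₂_le fun s hs => measure_mono hs.2) ?_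
  exact le_iSup₂_of_le t ⟨ht, subset_rfl⟩ le_rfl

lemma restrict_eq_of_subset [MeasurableSpace α] (μ : Measure α) {s t : Set α} (h : t ⊆ s) :
    μ.restrict s t = μ t := by
  refine le_antisymm (Measure.restrict_apply_le s t) ?_
  simpa [Set.inter_eq_self_of_subset_left h] using Measure.le_restrict_apply s t (μ := μ)

lemma exists_of_lt_iSup {ι : Type*} {P : ι → Prop} {f : ι → ℝ≥0∞} {c : ℝ≥0∞}
    (h : c < ⨆ x, ⨆ (_ : P x), f x) : ∃ x, P x ∧ c < f x := by
  obtain ⟨x, hx⟩ := lt_iSup_iff.mp h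
  by_cases hP : P x
  · exact ⟨x, hP, by rwa [iSup_pos hP] at hx⟩
  · rw [iSup_neg hP] at hx; exact absurd hx (by simp)

/-- If some finite abs.cont. measure gives `s` positive measure, then `propEF s 2 S ≤ 1`. -/
lemma propEF_le_one [MeasureSpace α] {s : Set α} (S : Set (Set α)) (μ : Measure α)
    [IsFiniteMeasure μ] (hac : μ ≪ volume) (hs : μ s ≠ 0) : propEF s 2 S ≤ 1 := by
  have hres : (μ.restrict s) s = μ s := restrict_eq_of_subset μ subset_rfl
  have hadm : ∀ i : Fin 2, IsFiniteMeasure (μ.restrict s) ∧ (μ.restrict s) ≪ volume ∧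
      (μ.restrict s) s ≠ 0 := fun i =>
    ⟨inferInstance, (Measure.absolutelyContinuous_of_le Measure.restrict_le_self).trans hac,
      by rw [hres]; exact hs⟩
  refine le_trans (iInf₂_le (fun _ => μ.restrict s) hadm) (iSup₂_le fun X hX => ?_)
  refine le_trans (iInf_le _ 0) (ENNReal.div_le_of_le_mul ?_)
  rw [one_mul]
  exact measure_mono ((Set.subset_iUnion X 0).trans hX.1.2.2)

/-- Core lemma: recursively divide a valuable `S`-piece envy-freely. -/
lemma key [MeasureSpace α] {C s : Set α} {S : Set (Set α)} {V : Fin 2 → Measure α}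
    (hV : ∀ i, IsFiniteMeasure (V i) ∧ V i ≪ volume ∧ V i C ≠ 0)
    (hsS : s ∈ S) (hsC : s ⊆ C) {p e : ℝ≥0∞}
    (hps : ∀ i, p * V i C < V i s)
    (he : e < ⨅ t ∈ S, propEF t 2 S) :
    p * e ≤ ⨆ (X : Fin 2 → Set α) (_ : IsAlloc C S X ∧ IsEnvyFree S V X),
      ⨅ i, V i (X i) / V i C := by
  haveI h0 := (hV 0).1
  haveI h1 := (hV 1).1
  haveI : ∀ i : Fin 2, IsFiniteMeasure (V i) := fun i => (hV i).1
  rcases eq_or_ne e 0 with rfl | he0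
  · simp
  set W : Fin 2 → Measure α := fun i => (V i).restrict s with hW
  have hVs0 : ∀ i, V i s ≠ 0 := fun i => (lt_of_le_of_lt zero_le (hps i)).ne'
  have hWs : ∀ i, W i s = V i s := fun i => restrict_eq_of_subset (V i) subset_rfl
  have hadm : ∀ i, IsFiniteMeasure (W i) ∧ W i ≪ volume ∧ W i s ≠ 0 := fun i =>
    ⟨inferInstance, (Measure.absolutelyContinuous_of_le Measure.restrict_le_self).trans
      (hV i).2.1, by rw [hWs]; exact hVs0 i⟩
  have hes : e < ⨆ (Z : Fin 2 → Set α) (_ : IsAlloc s S Z ∧ IsEnvyFree S W Z),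
      ⨅ i, W i (Z i) / W i s :=
    lt_of_lt_of_le (lt_of_lt_of_le he (iInf₂_le s hsS)) (iInf₂_le W hadm)
  obtain ⟨Z, ⟨hZa, hZef⟩, hZv⟩ := exists_of_lt_iSup hes
  have hZsub : ∀ i, Z i ⊆ s := fun i => (Set.subset_iUnion Z i).trans hZa.2.2
  have hWZ : ∀ i j, W i (Z j) = V i (Z j) := fun i j => restrict_eq_of_subset (V i) (hZsub j)
  have hZlow : ∀ i, e * V i s < V i (Z i) := by
    intro i
    have := lt_of_lt_of_le hZv (iInf_le _ i)
    rw [hWs, hWZ] at this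
    exact (ENNReal.lt_div_iff_mul_lt (Or.inl (hVs0 i)) (Or.inl (measure_ne_top _ _))).mp this
  have hZC : IsAlloc C S Z := ⟨hZa.1, hZa.2.1, hZa.2.2.trans hsC⟩
  have hZEF : IsEnvyFree S V Z := by
    intro i j
    have := hZef i j
    rw [sVal_eq_of_mem _ (hZa.1 j), sVal_eq_of_mem _ (hZa.1 i), hWZ, hWZ] at this
    rw [sVal_eq_of_mem _ (hZC.1 j), sVal_eq_of_mem _ (hZC.1 i)]
    exact this
  refine le_iSup₂_of_le Z ⟨hZC, hZEF⟩ (le_iInf fun i => ?_)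
  rw [ENNReal.le_div_iff_mul_le (Or.inl (hV i).2.2) (Or.inl (measure_ne_top _ _))]
  calc p * e * V i C = e * (p * V i C) := by ring
    _ ≤ e * V i s := mul_le_mul_right (hps i).le _
    _ ≤ V i (Z i) := (hZlow i).le

/-- For every cake `C` and family `S`:
`Prope(C,2,S) ≥ Prop(C,2,S) · inf_{s ∈ S} Prope(s,2,S)`. -/
theorem propEF_ge_propShare_mul_inf [MeasureSpace α] (C : Set α) (S : Set (Set α)) :
    propShare C 2 S * ⨅ s ∈ S, propEF s 2 S ≤ propEF C 2 S := by
  refine le_iInf fun V => le_iInf fun hV => ?_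
  haveI : ∀ i : Fin 2, IsFiniteMeasure (V i) := fun i => (hV i).1
  refine ENNReal.mul_le_of_forall_lt fun p hp e he => ?_
  rcases eq_or_ne p 0 with rfl | hp0
  · simp
  rcases eq_or_ne e 0 with rfl | he0
  · simp
  have hP : p < ⨆ (X : Fin 2 → Set α) (_ : IsAlloc C S X), ⨅ i, V i (X i) / V i C :=
    lt_of_lt_of_le hp (iInf₂_le V hV)
  obtain ⟨X, hXa, hXv⟩ := exists_of_lt_iSup hP
  have hXlow : ∀ i, p * V i C < V i (X i) := by
    intro i
    have := lt_of_lt_of_le hXv (iInf_le _ i)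
    exact (ENNReal.lt_div_iff_mul_lt (Or.inl (hV i).2.2)
      (Or.inl (measure_ne_top _ _))).mp this
  have hXC : ∀ i, X i ⊆ C := fun i => (Set.subset_iUnion X i).trans hXa.2.2
  have hX0 : ∀ i, V i (X i) ≠ 0 := fun i => by
    have : (0 : ℝ≥0∞) < p * V i C := ENNReal.mul_pos hp0 (hV i).2.2
    exact (this.trans (hXlow i)).ne'
  have he1 : e ≤ 1 := by
    refine le_trans (le_of_lt he) (le_trans (iInf₂_le (X 0) (hXa.1 0)) ?_)
    exact propEF_le_one S (V 0) (hV 0).2.1 (hX0 0)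
  by_cases h01 : V 0 (X 1) ≤ V 0 (X 0)
  · by_cases h10 : V 1 (X 0) ≤ V 1 (X 1)
    · have hEF : IsEnvyFree S V X := by
        intro i j
        rw [sVal_eq_of_mem _ (hXa.1 j), sVal_eq_of_mem _ (hXa.1 i)]
        fin_cases i <;> fin_cases j <;> simp_all
      refine le_iSup₂_of_le X ⟨hXa, hEF⟩ (le_iInf fun i => ?_)
      rw [ENNReal.le_div_iff_mul_le (Or.inl (hV i).2.2) (Or.inl (measure_ne_top _ _))]
      calc p * e * V i C ≤ p * 1 * V i C := by
            exact mul_le_mul_left (mul_le_mul_right he1 p) _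
        _ = p * V i C := by rw [mul_one]
        _ ≤ V i (X i) := (hXlow i).le
    · push_neg at h10
      refine key hV (hXa.1 0) (hXC 0) (fun i => ?_) he
      fin_cases i
      · exact hXlow 0
      · exact lt_trans (hXlow 1) h10
  · push_neg at h01
    by_cases h10 : V 1 (X 0) ≤ V 1 (X 1)
    · refine key hV (hXa.1 1) (hXC 1) (fun i => ?_) he
      fin_cases i
      · exact lt_trans (hXlow 0) h01
      · exact hXlow 1
    · push_neg at h10
      set Y : Fin 2 → Set α := ![X 1, X 0] with hY
      have hYa : IsAlloc C S Y := by
        refine ⟨fun i => ?_, fun i j hij => ?_, ?_⟩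
        · fin_cases i <;> simpa [hY] using hXa.1 _
        · fin_cases i <;> fin_cases j <;> simp_all [hY]
          · exact (hXa.2.1 1 0 (by decide))
          · exact (hXa.2.1 0 1 (by decide))
        · refine Set.iUnion_subset fun i => ?_
          fin_cases i <;> simpa [hY] using hXC _
      have hYEF : IsEnvyFree S V Y := by
        intro i j
        rw [sVal_eq_of_mem _ (hYa.1 j), sVal_eq_of_mem _ (hYa.1 i)]
        fin_cases i <;> fin_cases j <;> simp [hY]
        · exact h01.le
        · exact h10.le
      refine le_iSup₂_of_le Y ⟨hYa, hYEF⟩ (le_iInf fun i => ?_)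
      rw [ENNReal.le_div_iff_mul_le (Or.inl (hV i).2.2) (Or.inl (measure_ne_top _ _))]
      have hYlow : p * V i C < V i (Y i) := by
        fin_cases i
        · simpa [hY] using lt_trans (hXlow 0) h01
        · simpa [hY] using lt_trans (hXlow 1) h10
      calc p * e * V i C ≤ p * 1 * V i C :=
            mul_le_mul_left (mul_le_mul_right he1 p) _
        _ = p * V i C := by rw [mul_one]
        _ ≤ V i (Y i) := hYlow.le
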